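/- (Dynamic version of Proposition 1) In a finite two-player multistage game, for each player i and each k ∈ ℕ₀, the dynamic Δ^κ-rationalization procedure stabilizes for the level-k type after k steps: Σᵗ_{θ_{ik}} = Σᵏ_{θ_{ik}} for every t ≥ k. -/

import Mathlib

open scoped BigOperators
open Classical

noncomputable section

/-- A two-player multistage game: feasibility correspondences assigning to each history
(a finite sequence of action profiles, most recent first; `[]` is the root `∅`) the set
of feasible actions of each player. -/
structure MSGame (A B : Type*) where
  feas1 : List (A × B) → Finset A
  feas2 : List (A × B) → Finset B

namespace MSGame

variable {A B : Type*}

/-- A history is terminal iff no player has a feasible action there. -/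
def terminal (G : MSGame A B) (h : List (A × B)) : Prop :=
  G.feas1 h = ∅ ∧ G.feas2 h = ∅

/-- Feasible histories: the root is feasible, and a profile may be appended to a
feasible non-terminal history iff each component is feasible for its player. -/
def feasible (G : MSGame A B) : List (A × B) → Prop
  | [] => True
  | p :: h => feasible G h ∧ ¬G.terminal h ∧ p.1 ∈ G.feas1 h ∧ p.2 ∈ G.feas2 h

/-- Well-formedness: the "wait" convention (an inactive player has exactly her waiting
move, so one feasibility set is empty iff the other is), finitely many feasible
histories, and a nontrivial root. -/
def WellFormed (G : MSGame A B) : Prop :=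
  (∀ h : List (A × B), (G.feas1 h = ∅ ↔ G.feas2 h = ∅)) ∧
  {h : List (A × B) | G.feasible h}.Finite ∧ ¬G.terminal []

/-- The set `H` of non-terminal feasible histories, as a type. -/
def Hist (G : MSGame A B) : Type _ := {h : List (A × B) // G.feasible h ∧ ¬G.terminal h}

end MSGame

/-- A strategy of player 1: a feasible action at every non-terminal feasible history. -/
structure Strat1 {A B : Type*} (G : MSGame A B) where
  act : G.Hist → A
  mem : ∀ h : G.Hist, act h ∈ G.feas1 h.1

/-- A strategy of player 2. -/
structure Strat2 {A B : Type*} (G : MSGame A B) where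
  act : G.Hist → B
  mem : ∀ h : G.Hist, act h ∈ G.feas2 h.1

/-- `s ∈ S₁(h)`: player 1's strategy `s` is consistent with reaching history `h`
(it prescribes, at every proper prefix of `h`, the action played in `h`). -/
def consistent1 {A B : Type*} (G : MSGame A B) (s : Strat1 G) (h : List (A × B)) : Prop :=
  ∀ (h' : G.Hist) (p : A × B) (l : List (A × B)), h = l ++ p :: h'.1 → s.act h' = p.1

/-- `s ∈ S₂(h)`. -/
def consistent2 {A B : Type*} (G : MSGame A B) (s : Strat2 G) (h : List (A × B)) : Prop :=
  ∀ (h' : G.Hist) (p : A × B) (l : List (A × B)), h = l ++ p :: h'.1 → s.act h' = p.2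

/-- Fuelled play function. -/
def playAux {A B : Type*} (G : MSGame A B) (s1 : Strat1 G) (s2 : Strat2 G) :
    ℕ → List (A × B) → List (A × B)
  | 0, h => h
  | n + 1, h =>
      if hf : G.feasible h ∧ ¬G.terminal h then
        playAux G s1 s2 n ((s1.act ⟨h, hf⟩, s2.act ⟨h, hf⟩) :: h)
      else h

/-- The terminal history `ζ(s₁,s₂)` induced by a strategy profile (in a well-formed
game the fuel suffices to reach a terminal history). -/
def play {A B : Type*} (G : MSGame A B) (s1 : Strat1 G) (s2 : Strat2 G) : List (A × B) :=
  playAux G s1 s2 ({h : List (A × B) | G.feasible h}.ncard + 1) []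

/-- Player 1's payoff `U₁(θ, s)`: the level-0 type gets constant 0, other levels get
`v₁` at the induced terminal history. -/
def payU1 {A B : Type*} (G : MSGame A B) (v1 : List (A × B) → ℝ)
    (θ : ℕ) (s1 : Strat1 G) (s2 : Strat2 G) : ℝ :=
  if θ = 0 then 0 else v1 (play G s1 s2)

/-- Player 2's payoff `U₂(θ, s)`. -/
def payU2 {A B : Type*} (G : MSGame A B) (v2 : List (A × B) → ℝ)
    (θ : ℕ) (s1 : Strat1 G) (s2 : Strat2 G) : ℝ :=
  if θ = 0 then 0 else v2 (play G s1 s2)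

/-- A conditional probability system of player 1 over (opponent level, opponent
strategy) pairs: at each `h ∈ H` a probability distribution concentrated on
`Θ × S₂(h)`, satisfying the chain rule. -/
structure CPS2 {A B : Type*} (G : MSGame A B) where
  p : G.Hist → ℕ × Strat2 G → ℝ
  nonneg : ∀ h x, 0 ≤ p h x
  supp : ∀ h x, p h x ≠ 0 → consistent2 G x.2 h.1
  hasSum_one : ∀ h, HasSum (p h) 1
  chain : ∀ h' h'' : G.Hist, h'.1 <:+ h''.1 → h'.1 ≠ h''.1 →
    ∀ x : ℕ × Strat2 G, consistent2 G x.2 h''.1 →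
      p h' x = p h'' x * ∑' y : ℕ × Strat2 G, (if consistent2 G y.2 h''.1 then p h' y else 0)

/-- A conditional probability system of player 2. -/
structure CPS1 {A B : Type*} (G : MSGame A B) where
  p : G.Hist → ℕ × Strat1 G → ℝ
  nonneg : ∀ h x, 0 ≤ p h x
  supp : ∀ h x, p h x ≠ 0 → consistent1 G x.2 h.1
  hasSum_one : ∀ h, HasSum (p h) 1
  chain : ∀ h' h'' : G.Hist, h'.1 <:+ h''.1 → h'.1 ≠ h''.1 →
    ∀ x : ℕ × Strat1 G, consistent1 G x.2 h''.1 →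
      p h' x = p h'' x * ∑' y : ℕ × Strat1 G, (if consistent1 G y.2 h''.1 then p h' y else 0)

/-- Marginal probability of the opponent's level-`t` type at history `h` (player 1's CPS). -/
def margD2 {A B : Type*} {G : MSGame A B} (μ : CPS2 G) (h : G.Hist) (t : ℕ) : ℝ :=
  ∑' s : Strat2 G, μ.p h (t, s)

def margD1 {A B : Type*} {G : MSGame A B} (μ : CPS1 G) (h : G.Hist) (t : ℕ) : ℝ :=
  ∑' s : Strat1 G, μ.p h (t, s)

/-- `f` normalized to the levels `0, …, k-1` (`f^k` in the paper). -/
def fnorm (f : ℕ → ℝ) (k t : ℕ) : ℝ := f t / ∑ ℓ ∈ Finset.range k, f ℓ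

/-- DK1–DK3 (membership in the dynamic `Δ^{θ_{1k}}`); no restriction for `k = 0`. -/
def memDeltaD2 {A B : Type*} (G : MSGame A B) (f : ℕ → ℝ) (k : ℕ) (μ : CPS2 G) : Prop :=
  k ≠ 0 →
    ((∀ (h : G.Hist) (t : ℕ), k ≤ t → margD2 μ h t = 0) ∧
     (∀ h : G.Hist, 0 < margD2 μ h 0 →
        ∀ s : Strat2 G, consistent2 G s h.1 →
          μ.p h (0, s) / margD2 μ h 0 =
            1 / (({s' : Strat2 G | consistent2 G s' h.1}).ncard : ℝ)) ∧
     (∀ hr : G.feasible [] ∧ ¬G.terminal [],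
        ∀ t : ℕ, t < k → margD2 μ ⟨[], hr⟩ t = fnorm f k t))

def memDeltaD1 {A B : Type*} (G : MSGame A B) (f : ℕ → ℝ) (k : ℕ) (μ : CPS1 G) : Prop :=
  k ≠ 0 →
    ((∀ (h : G.Hist) (t : ℕ), k ≤ t → margD1 μ h t = 0) ∧
     (∀ h : G.Hist, 0 < margD1 μ h 0 →
        ∀ s : Strat1 G, consistent1 G s h.1 →
          μ.p h (0, s) / margD1 μ h 0 =
            1 / (({s' : Strat1 G | consistent1 G s' h.1}).ncard : ℝ)) ∧
     (∀ hr : G.feasible [] ∧ ¬G.terminal [],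
        ∀ t : ℕ, t < k → margD1 μ ⟨[], hr⟩ t = fnorm f k t))

/-- Player 1's conditional expected payoff at `h` from strategy `s1`, own level `θ`. -/
def expU1 {A B : Type*} (G : MSGame A B) (v1 : List (A × B) → ℝ)
    (θ : ℕ) (μ : CPS2 G) (h : G.Hist) (s1 : Strat1 G) : ℝ :=
  ∑' x : ℕ × Strat2 G, μ.p h x * payU1 G v1 θ s1 x.2

def expU2 {A B : Type*} (G : MSGame A B) (v2 : List (A × B) → ℝ)
    (θ : ℕ) (μ : CPS1 G) (h : G.Hist) (s2 : Strat2 G) : ℝ :=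
  ∑' x : ℕ × Strat1 G, μ.p h x * payU2 G v2 θ x.2 s2

/-- Sequential rationality of `s1` for the level-`θ` type of player 1 w.r.t. CPS `μ`. -/
def seqRat1 {A B : Type*} (G : MSGame A B) (v1 : List (A × B) → ℝ)
    (θ : ℕ) (μ : CPS2 G) (s1 : Strat1 G) : Prop :=
  ∀ h : G.Hist, consistent1 G s1 h.1 →
    ∀ s1' : Strat1 G, consistent1 G s1' h.1 →
      expU1 G v1 θ μ h s1' ≤ expU1 G v1 θ μ h s1

def seqRat2 {A B : Type*} (G : MSGame A B) (v2 : List (A × B) → ℝ)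
    (θ : ℕ) (μ : CPS1 G) (s2 : Strat2 G) : Prop :=
  ∀ h : G.Hist, consistent2 G s2 h.1 →
    ∀ s2' : Strat2 G, consistent2 G s2' h.1 →
      expU2 G v2 θ μ h s2' ≤ expU2 G v2 θ μ h s2

/-- The dynamic Δ^κ-rationalization procedure (pairs of surviving
(level, strategy) sets for the two players). -/
def SigmaD {A B : Type*} (G : MSGame A B) (v1 v2 : List (A × B) → ℝ) (f : ℕ → ℝ) :
    ℕ → Set (ℕ × Strat1 G) × Set (ℕ × Strat2 G)
  | 0 => (Set.univ, Set.univ)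
  | n + 1 =>
      let P := SigmaD G v1 v2 f n
      ({x | x ∈ P.1 ∧ ∃ μ : CPS2 G, memDeltaD2 G f x.1 μ ∧
          (∀ h : G.Hist, (∃ y : ℕ × Strat2 G, y ∈ P.2 ∧ consistent2 G y.2 h.1) →
            ∑' y : ℕ × Strat2 G, Set.indicator P.2 (μ.p h) y = 1) ∧
          seqRat1 G v1 x.1 μ x.2},
       {x | x ∈ P.2 ∧ ∃ μ : CPS1 G, memDeltaD1 G f x.1 μ ∧
          (∀ h : G.Hist, (∃ y : ℕ × Strat1 G, y ∈ P.1 ∧ consistent1 G y.2 h.1) →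
            ∑' y : ℕ × Strat1 G, Set.indicator P.1 (μ.p h) y = 1) ∧
          seqRat2 G v2 x.1 μ x.2})

/-- The section `Σⁿ_{θ_{1k}}` (a set of strategies of player 1). -/
def SigmaDSec1 {A B : Type*} (G : MSGame A B) (v1 v2 : List (A × B) → ℝ) (f : ℕ → ℝ)
    (n k : ℕ) : Set (Strat1 G) :=
  {s | (k, s) ∈ (SigmaD G v1 v2 f n).1}

def SigmaDSec2 {A B : Type*} (G : MSGame A B) (v1 v2 : List (A × B) → ℝ) (f : ℕ → ℝ)
    (n k : ℕ) : Set (Strat2 G) :=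
  {s | (k, s) ∈ (SigmaD G v1 v2 f n).2}

/-- The DCH-procedure: step `n` returns, for each player and each level `k`, the set of
surviving strategies `Λⁿ_{θ_{ik}}`. -/
def LambdaD {A B : Type*} (G : MSGame A B) (v1 v2 : List (A × B) → ℝ) (f : ℕ → ℝ) :
    ℕ → (ℕ → Set (Strat1 G)) × (ℕ → Set (Strat2 G))
  | 0 => (fun _ => Set.univ, fun _ => Set.univ)
  | n + 1 =>
      let P := LambdaD G v1 v2 f n
      (fun k =>
        if k = n + 1 then
          {s | ∃ μ : CPS2 G, memDeltaD2 G f (n + 1) μ ∧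
            (∀ hr : G.feasible [] ∧ ¬G.terminal [],
              (∀ x : ℕ × Strat2 G, μ.p ⟨[], hr⟩ x ≠ 0 ↔ x.1 ≤ n ∧ x.2 ∈ P.2 x.1) ∧
              (∀ t : ℕ, t ≤ n → ∀ s2 s2' : Strat2 G, s2 ∈ P.2 t → s2' ∈ P.2 t →
                μ.p ⟨[], hr⟩ (t, s2) = μ.p ⟨[], hr⟩ (t, s2'))) ∧
            seqRat1 G v1 (n + 1) μ s}
        else P.1 k,
       fun k =>
        if k = n + 1 then
          {s | ∃ μ : CPS1 G, memDeltaD1 G f (n + 1) μ ∧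
            (∀ hr : G.feasible [] ∧ ¬G.terminal [],
              (∀ x : ℕ × Strat1 G, μ.p ⟨[], hr⟩ x ≠ 0 ↔ x.1 ≤ n ∧ x.2 ∈ P.1 x.1) ∧
              (∀ t : ℕ, t ≤ n → ∀ s1 s1' : Strat1 G, s1 ∈ P.1 t → s1' ∈ P.1 t →
                μ.p ⟨[], hr⟩ (t, s1) = μ.p ⟨[], hr⟩ (t, s1'))) ∧
            seqRat2 G v2 (n + 1) μ s}
        else P.2 k)

/-- `Λⁿ_{θ_{1k}}`. -/
def LambdaDSec1 {A B : Type*} (G : MSGame A B) (v1 v2 : List (A × B) → ℝ) (f : ℕ → ℝ)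
    (n k : ℕ) : Set (Strat1 G) :=
  (LambdaD G v1 v2 f n).1 k

/-- `Λⁿ_{θ_{2k}}`. -/
def LambdaDSec2 {A B : Type*} (G : MSGame A B) (v1 v2 : List (A × B) → ℝ) (f : ℕ → ℝ)
    (n k : ℕ) : Set (Strat2 G) :=
  (LambdaD G v1 v2 f n).2 k

end


set_option linter.unusedSectionVars false

noncomputable section DynP1AuxSection
namespace DynP1Aux

variable {P S : Type*} (cons : S → List P → Prop) (f : ℕ → ℝ) (T : Set (ℕ × S))

/-- base weight -/
def gw (x : ℕ × S) : ℝ := f x.1 / (Nat.card S : ℝ)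

def gQ (l : List P) : Set (ℕ × S) := {x : ℕ × S | x ∈ T ∧ cons x.2 l}

def gZ (l : List P) : Set (ℕ × S) := {x : ℕ × S | x.1 = 0 ∧ cons x.2 l}

def gW (l : List P) : ℝ := ∑' x : ℕ × S, (gQ cons T l).indicator (gw (S := S) f) x

def gm (l : List P) : ℝ := (Nat.card {s : S // cons s l} : ℝ)

def gp (l : List P) (x : ℕ × S) : ℝ :=
  if ∃ y ∈ T, cons y.2 l then
    (gQ cons T l).indicator (gw (S := S) f) x / gW cons f T l
  else (gZ cons l).indicator (fun _ => 1 / gm cons l) x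

variable [Finite S] [Nonempty S]

lemma gw_pos (hf : ∀ n, 0 < f n) (x : ℕ × S) : 0 < gw (S := S) f x :=
  div_pos (hf x.1) (by exact_mod_cast Nat.card_pos)

lemma gw_summable (hfs : Summable f) (hf : ∀ n, 0 < f n) :
    Summable (gw (S := S) f) := by
  haveI : Fintype S := Fintype.ofFinite S
  rw [summable_prod_of_nonneg (fun x => (gw_pos f hf x).le)]
  refine ⟨fun t => Summable.of_finite, ?_⟩
  have hcard : ((Nat.card S : ℝ)) ≠ 0 := by exact_mod_cast Nat.card_pos.ne'
  apply hfs.congr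
  intro t
  show f t = ∑' s : S, gw (S := S) f (t, s)
  rw [show (fun s : S => gw (S := S) f (t, s)) = fun _ : S => f t / (Nat.card S : ℝ) from rfl]
  rw [tsum_const, nsmul_eq_mul, mul_div_assoc', mul_div_cancel_left₀ _ hcard]

lemma gQ_summable (hfs : Summable f) (hf : ∀ n, 0 < f n) (l : List P) :
    Summable ((gQ cons T l).indicator (gw (S := S) f)) :=
  (gw_summable f hfs hf).indicator _

lemma gW_nonneg (hf : ∀ n, 0 < f n) (l : List P) : 0 ≤ gW cons f T l :=
  tsum_nonneg fun x => Set.indicator_nonneg (fun y _ => (gw_pos f hf y).le) x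

lemma gW_pos (hfs : Summable f) (hf : ∀ n, 0 < f n) (l : List P)
    (hR : ∃ y ∈ T, cons y.2 l) : 0 < gW cons f T l := by
  obtain ⟨y, hyT, hyc⟩ := hR
  refine Summable.tsum_pos (gQ_summable cons f T hfs hf l)
    (fun x => Set.indicator_nonneg (fun z _ => (gw_pos f hf z).le) x) y ?_
  have m1 : y ∈ gQ cons T l := ⟨hyT, hyc⟩
  rw [Set.indicator_of_mem m1]
  exact gw_pos f hf y

def gZequiv (l : List P) : {x : ℕ × S // x.1 = 0 ∧ cons x.2 l} ≃ {s : S // cons s l} :=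
  { toFun := fun x => ⟨x.1.2, x.2.2⟩
    invFun := fun s => ⟨((0 : ℕ), s.1), by exact ⟨rfl, s.2⟩⟩
    left_inv := by rintro ⟨⟨t, s⟩, ht, hc⟩; simp only at ht; subst ht; rfl
    right_inv := fun s => rfl }

lemma gZ_finite (l : List P) : (gZ (S := S) cons l).Finite := by
  have h : gZ (S := S) cons l ⊆ ({0} : Set ℕ) ×ˢ (Set.univ : Set S) :=
    fun x hx => ⟨hx.1, trivial⟩
  exact ((Set.finite_singleton 0).prod Set.finite_univ).subset h

lemma gZ_indicator_summable (l : List P) (c : ℝ) :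
    Summable ((gZ (S := S) cons l).indicator (fun _ => c)) := by
  apply summable_of_ne_finset_zero (s := (gZ_finite cons l).toFinset)
  intro x hx
  exact Set.indicator_of_notMem (by simpa using hx) _

lemma gZ_tsum (l : List P) (c : ℝ) :
    ∑' x : ℕ × S, (gZ (S := S) cons l).indicator (fun _ => c) x = gm (S := S) cons l * c := by
  rw [← tsum_subtype, tsum_const, nsmul_eq_mul]
  congr 1
  show ((Nat.card (gZ (S := S) cons l) : ℕ) : ℝ) = gm (S := S) cons l
  unfold gm
  congr 1
  exact Nat.card_congr (gZequiv cons l)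

lemma gm_pos (l : List P) (hl : ∃ s, cons s l) : 0 < gm (S := S) cons l := by
  obtain ⟨s, hs⟩ := hl
  haveI : Nonempty {s : S // cons s l} := ⟨⟨s, hs⟩⟩
  unfold gm
  exact_mod_cast Nat.card_pos

lemma gp_nonneg (hf : ∀ n, 0 < f n) (l : List P) (x : ℕ × S) : 0 ≤ gp cons f T l x := by
  unfold gp
  split
  · exact div_nonneg (Set.indicator_nonneg (fun z _ => (gw_pos f hf z).le) x)
      (gW_nonneg cons f T hf l)
  · refine Set.indicator_nonneg (fun z _ => ?_) x
    refine div_nonneg zero_le_one ?_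
    unfold gm
    exact Nat.cast_nonneg _

lemma gp_supp (l : List P) (x : ℕ × S) (hx : gp cons f T l x ≠ 0) : cons x.2 l := by
  unfold gp at hx
  split at hx
  · by_contra hc
    exact hx (by rw [Set.indicator_of_notMem (fun h => hc h.2), zero_div])
  · by_contra hc
    exact hx (Set.indicator_of_notMem (fun h => hc h.2) _)

lemma gp_T (l : List P) (x : ℕ × S) (hR : ∃ y ∈ T, cons y.2 l) (hx : x ∉ T) :
    gp cons f T l x = 0 := by
  unfold gp
  rw [if_pos hR, Set.indicator_of_notMem (fun h => hx h.1), zero_div]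

lemma gp_hasSum (hfs : Summable f) (hf : ∀ n, 0 < f n) (l : List P) (hl : ∃ s, cons s l) :
    HasSum (gp cons f T l) 1 := by
  unfold gp
  by_cases hR : ∃ y ∈ T, cons y.2 l
  · simp only [if_pos hR]
    have hs : Summable fun x => (gQ cons T l).indicator (gw (S := S) f) x / gW cons f T l :=
      (gQ_summable cons f T hfs hf l).div_const _
    rw [hs.hasSum_iff, tsum_div_const]
    exact div_self (gW_pos cons f T hfs hf l hR).ne'
  · simp only [if_neg hR]
    rw [(gZ_indicator_summable cons l _).hasSum_iff, gZ_tsum]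
    rw [mul_one_div]
    exact div_self (gm_pos cons l hl).ne'

lemma gp_chain (hmono : ∀ (s : S) (l l' : List P), l <:+ l' → cons s l' → cons s l)
    (hfs : Summable f) (hf : ∀ n, 0 < f n)
    (l' l'' : List P) (hl'' : ∃ s, cons s l'') (hsuf : l' <:+ l'')
    (x : ℕ × S) (hx : cons x.2 l'') :
    gp cons f T l' x = gp cons f T l'' x *
      ∑' y : ℕ × S, (if cons y.2 l'' then gp cons f T l' y else 0) := by
  have hx' : cons x.2 l' := hmono _ _ _ hsuf hx
  by_cases hR'' : ∃ y ∈ T, cons y.2 l''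
  · have hR' : ∃ y ∈ T, cons y.2 l' := by
      obtain ⟨y, hyT, hyc⟩ := hR''
      exact ⟨y, hyT, hmono _ _ _ hsuf hyc⟩
    have hM : (∑' y : ℕ × S, (if cons y.2 l'' then gp cons f T l' y else 0))
        = gW cons f T l'' / gW cons f T l' := by
      have heq : ∀ y : ℕ × S, (if cons y.2 l'' then gp cons f T l' y else 0)
          = (gQ cons T l'').indicator (gw (S := S) f) y / gW cons f T l' := by
        intro y
        by_cases hy : cons y.2 l''
        · rw [if_pos hy]
          unfold gp
          rw [if_pos hR']
          congr 1
          by_cases hyT : y ∈ T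
          · have m1 : y ∈ gQ cons T l' := ⟨hyT, hmono _ _ _ hsuf hy⟩
            have m2 : y ∈ gQ cons T l'' := ⟨hyT, hy⟩
            rw [Set.indicator_of_mem m1, Set.indicator_of_mem m2]
          · rw [Set.indicator_of_notMem (fun h => hyT h.1),
              Set.indicator_of_notMem (fun h => hyT h.1)]
        · rw [if_neg hy, Set.indicator_of_notMem (fun h => hy h.2), zero_div]
      rw [tsum_congr heq, tsum_div_const]
      rfl
    rw [hM]
    unfold gp
    rw [if_pos hR', if_pos hR'']
    have hind : (gQ cons T l').indicator (gw (S := S) f) x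
        = (gQ cons T l'').indicator (gw (S := S) f) x := by
      by_cases hxT : x ∈ T
      · have m1 : x ∈ gQ cons T l' := ⟨hxT, hx'⟩
        have m2 : x ∈ gQ cons T l'' := ⟨hxT, hx⟩
        rw [Set.indicator_of_mem m1, Set.indicator_of_mem m2]
      · rw [Set.indicator_of_notMem (fun h => hxT h.1),
          Set.indicator_of_notMem (fun h => hxT h.1)]
    rw [hind, div_mul_div_comm, mul_comm (gW cons f T l'') (gW cons f T l'),
      mul_div_mul_right _ _ (gW_pos cons f T hfs hf l'' hR'').ne']
  · by_cases hR' : ∃ y ∈ T, cons y.2 l'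
    · have hM : (∑' y : ℕ × S, (if cons y.2 l'' then gp cons f T l' y else 0)) = 0 := by
        have heq : ∀ y : ℕ × S, (if cons y.2 l'' then gp cons f T l' y else 0) = 0 := by
          intro y
          by_cases hy : cons y.2 l''
          · rw [if_pos hy]
            unfold gp
            rw [if_pos hR', Set.indicator_of_notMem, zero_div]
            rintro ⟨hyT, _⟩
            exact hR'' ⟨y, hyT, hy⟩
          · rw [if_neg hy]
        rw [tsum_congr heq, tsum_zero]
      have hL : gp cons f T l' x = 0 := by
        unfold gp
        rw [if_pos hR', Set.indicator_of_notMem, zero_div]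
        rintro ⟨hxT, _⟩
        exact hR'' ⟨x, hxT, hx⟩
      rw [hL, hM, mul_zero]
    · have hM : (∑' y : ℕ × S, (if cons y.2 l'' then gp cons f T l' y else 0))
          = gm (S := S) cons l'' * (1 / gm (S := S) cons l') := by
        have heq : ∀ y : ℕ × S, (if cons y.2 l'' then gp cons f T l' y else 0)
            = (gZ (S := S) cons l'').indicator (fun _ => 1 / gm (S := S) cons l') y := by
          intro y
          by_cases hy : cons y.2 l''
          · rw [if_pos hy]
            unfold gp
            rw [if_neg hR']
            by_cases hy0 : y.1 = 0
            · have m1 : y ∈ gZ (S := S) cons l' := ⟨hy0, hmono _ _ _ hsuf hy⟩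
              have m2 : y ∈ gZ (S := S) cons l'' := ⟨hy0, hy⟩
              rw [Set.indicator_of_mem m1, Set.indicator_of_mem m2]
            · rw [Set.indicator_of_notMem (fun h => hy0 h.1),
                Set.indicator_of_notMem (fun h => hy0 h.1)]
          · rw [if_neg hy, Set.indicator_of_notMem (fun h => hy h.2)]
        rw [tsum_congr heq, gZ_tsum]
      rw [hM]
      unfold gp
      rw [if_neg hR', if_neg hR'']
      have hm'' : gm (S := S) cons l'' ≠ 0 := (gm_pos cons l'' hl'').ne'
      by_cases hx0 : x.1 = 0
      · have m1 : x ∈ gZ (S := S) cons l' := ⟨hx0, hx'⟩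
        have m2 : x ∈ gZ (S := S) cons l'' := ⟨hx0, hx⟩
        rw [Set.indicator_of_mem m1, Set.indicator_of_mem m2]
        field_simp
      · rw [Set.indicator_of_notMem (fun h => hx0 h.1),
          Set.indicator_of_notMem (fun h => hx0 h.1), zero_mul]


variable {A B : Type*}

lemma feas_decomp (G : MSGame A B) : ∀ (l : List (A × B)) (p : A × B) (g : List (A × B)),
    G.feasible (l ++ p :: g) →
    G.feasible g ∧ ¬G.terminal g ∧ p.1 ∈ G.feas1 g ∧ p.2 ∈ G.feas2 g := by
  intro l
  induction l with
  | nil => intro p g h; exact h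
  | cons q l IH => intro p g h; exact IH p g h.1

lemma consistent1_mono (G : MSGame A B) (s : Strat1 G) {l l' : List (A × B)}
    (hsuf : l <:+ l') (h : consistent1 G s l') : consistent1 G s l := by
  obtain ⟨pre, rfl⟩ := hsuf
  intro h' p lst heq
  exact h h' p (pre ++ lst) (by rw [heq, List.append_assoc])

lemma consistent2_mono (G : MSGame A B) (s : Strat2 G) {l l' : List (A × B)}
    (hsuf : l <:+ l') (h : consistent2 G s l') : consistent2 G s l := by
  obtain ⟨pre, rfl⟩ := hsuf
  intro h' p lst heq
  exact h h' p (pre ++ lst) (by rw [heq, List.append_assoc])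

lemma feas1_ne (G : MSGame A B) (hG : G.WellFormed) (h : G.Hist) :
    ∃ a, a ∈ G.feas1 h.1 := by
  by_contra hc
  push_neg at hc
  have h1 : G.feas1 h.1 = ∅ := Finset.eq_empty_iff_forall_notMem.mpr hc
  exact h.2.2 ⟨h1, (hG.1 h.1).mp h1⟩

lemma feas2_ne (G : MSGame A B) (hG : G.WellFormed) (h : G.Hist) :
    ∃ b, b ∈ G.feas2 h.1 := by
  by_contra hc
  push_neg at hc
  have h2 : G.feas2 h.1 = ∅ := Finset.eq_empty_iff_forall_notMem.mpr hc
  exact h.2.2 ⟨(hG.1 h.1).mpr h2, h2⟩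

lemma nonempty_strat1 (G : MSGame A B) (hG : G.WellFormed) : Nonempty (Strat1 G) :=
  ⟨⟨fun h => (feas1_ne G hG h).choose, fun h => (feas1_ne G hG h).choose_spec⟩⟩

lemma nonempty_strat2 (G : MSGame A B) (hG : G.WellFormed) : Nonempty (Strat2 G) :=
  ⟨⟨fun h => (feas2_ne G hG h).choose, fun h => (feas2_ne G hG h).choose_spec⟩⟩

lemma finite_hist (G : MSGame A B) (hG : G.WellFormed) : Finite G.Hist := by
  have h2 : {h : List (A × B) | G.feasible h ∧ ¬G.terminal h}.Finite :=
    hG.2.1.subset fun h hh => hh.1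
  exact h2.to_subtype

lemma finite_strat1 (G : MSGame A B) (hG : G.WellFormed) : Finite (Strat1 G) := by
  haveI := finite_hist G hG
  haveI : ∀ h : G.Hist, Finite {a : A // a ∈ G.feas1 h.1} :=
    fun h => (G.feas1 h.1).finite_toSet.to_subtype
  refine Finite.of_injective
    (fun s : Strat1 G =>
      (fun h : G.Hist => (⟨s.act h, s.mem h⟩ : {a : A // a ∈ G.feas1 h.1}))) ?_
  intro s t hst
  have hact : s.act = t.act := by
    funext h
    exact congrArg Subtype.val (congrFun hst h)
  cases s; cases t
  simp_all

lemma finite_strat2 (G : MSGame A B) (hG : G.WellFormed) : Finite (Strat2 G) := by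
  haveI := finite_hist G hG
  haveI : ∀ h : G.Hist, Finite {b : B // b ∈ G.feas2 h.1} :=
    fun h => (G.feas2 h.1).finite_toSet.to_subtype
  refine Finite.of_injective
    (fun s : Strat2 G =>
      (fun h : G.Hist => (⟨s.act h, s.mem h⟩ : {b : B // b ∈ G.feas2 h.1}))) ?_
  intro s t hst
  have hact : s.act = t.act := by
    funext h
    exact congrArg Subtype.val (congrFun hst h)
  cases s; cases t
  simp_all

lemma exists_consistent1 (G : MSGame A B) (hG : G.WellFormed) (l : List (A × B))
    (hl : G.feasible l) : ∃ s : Strat1 G, consistent1 G s l := by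
  classical
  refine ⟨⟨fun h =>
    if hd : ∃ q : (A × B) × List (A × B), l = q.2 ++ q.1 :: h.1 then hd.choose.1.1
    else (feas1_ne G hG h).choose, ?_⟩, ?_⟩
  · intro h
    show (if hd : ∃ q : (A × B) × List (A × B), l = q.2 ++ q.1 :: h.1 then hd.choose.1.1
      else (feas1_ne G hG h).choose) ∈ G.feas1 h.1
    split
    · next hd =>
      have hspec := hd.choose_spec
      have := feas_decomp G hd.choose.2 hd.choose.1 h.1 (hspec ▸ hl)
      exact this.2.2.1
    · exact (feas1_ne G hG h).choose_spec
  · intro h p lst heq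
    dsimp only
    have hd : ∃ q : (A × B) × List (A × B), l = q.2 ++ q.1 :: h.1 := ⟨(p, lst), heq⟩
    rw [dif_pos hd]
    have hspec := hd.choose_spec
    have hcat : hd.choose.2 ++ hd.choose.1 :: h.1 = lst ++ p :: h.1 := hspec.symm.trans heq
    have hlen : hd.choose.2.length = lst.length := by
      have := congrArg List.length hcat
      simp only [List.length_append, List.length_cons] at this
      omega
    obtain ⟨h1, h2⟩ := List.append_inj hcat hlen
    injection h2 with h3 _
    exact congrArg Prod.fst h3

lemma exists_consistent2 (G : MSGame A B) (hG : G.WellFormed) (l : List (A × B))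
    (hl : G.feasible l) : ∃ s : Strat2 G, consistent2 G s l := by
  classical
  refine ⟨⟨fun h =>
    if hd : ∃ q : (A × B) × List (A × B), l = q.2 ++ q.1 :: h.1 then hd.choose.1.2
    else (feas2_ne G hG h).choose, ?_⟩, ?_⟩
  · intro h
    show (if hd : ∃ q : (A × B) × List (A × B), l = q.2 ++ q.1 :: h.1 then hd.choose.1.2
      else (feas2_ne G hG h).choose) ∈ G.feas2 h.1
    split
    · next hd =>
      have hspec := hd.choose_spec
      have := feas_decomp G hd.choose.2 hd.choose.1 h.1 (hspec ▸ hl)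
      exact this.2.2.2
    · exact (feas2_ne G hG h).choose_spec
  · intro h p lst heq
    dsimp only
    have hd : ∃ q : (A × B) × List (A × B), l = q.2 ++ q.1 :: h.1 := ⟨(p, lst), heq⟩
    rw [dif_pos hd]
    have hspec := hd.choose_spec
    have hcat : hd.choose.2 ++ hd.choose.1 :: h.1 = lst ++ p :: h.1 := hspec.symm.trans heq
    have hlen : hd.choose.2.length = lst.length := by
      have := congrArg List.length hcat
      simp only [List.length_append, List.length_cons] at this
      omega
    obtain ⟨h1, h2⟩ := List.append_inj hcat hlen
    injection h2 with h3 _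
    exact congrArg Prod.snd h3

lemma exists_cps2 (G : MSGame A B) (hG : G.WellFormed) (f : ℕ → ℝ)
    (hf : ∀ n, 0 < f n) (hfsum : HasSum f 1) (T : Set (ℕ × Strat2 G)) :
    ∃ μ : CPS2 G, ∀ (h : G.Hist) (x : ℕ × Strat2 G),
      (∃ y ∈ T, consistent2 G y.2 h.1) → x ∉ T → μ.p h x = 0 := by
  haveI := finite_strat2 G hG
  haveI := nonempty_strat2 G hG
  set cons : Strat2 G → List (A × B) → Prop := fun s l => consistent2 G s l with hcons
  have hmono : ∀ (s : Strat2 G) (l l' : List (A × B)), l <:+ l' → cons s l' → cons s l :=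
    fun s l l' hsuf hc => consistent2_mono G s hsuf hc
  refine ⟨⟨fun h => gp cons f T h.1,
    fun h x => gp_nonneg cons f T hf h.1 x,
    fun h x hx => gp_supp cons f T h.1 x hx,
    fun h => gp_hasSum cons f T hfsum.summable hf h.1 (exists_consistent2 G hG h.1 h.2.1),
    fun h' h'' hsuf _ x hx => gp_chain cons f T hmono hfsum.summable hf h'.1 h''.1
      (exists_consistent2 G hG h''.1 h''.2.1) hsuf x hx⟩,
    fun h x hR hx => gp_T cons f T h.1 x hR hx⟩

lemma exists_cps1 (G : MSGame A B) (hG : G.WellFormed) (f : ℕ → ℝ)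
    (hf : ∀ n, 0 < f n) (hfsum : HasSum f 1) (T : Set (ℕ × Strat1 G)) :
    ∃ μ : CPS1 G, ∀ (h : G.Hist) (x : ℕ × Strat1 G),
      (∃ y ∈ T, consistent1 G y.2 h.1) → x ∉ T → μ.p h x = 0 := by
  haveI := finite_strat1 G hG
  haveI := nonempty_strat1 G hG
  set cons : Strat1 G → List (A × B) → Prop := fun s l => consistent1 G s l with hcons
  have hmono : ∀ (s : Strat1 G) (l l' : List (A × B)), l <:+ l' → cons s l' → cons s l :=
    fun s l l' hsuf hc => consistent1_mono G s hsuf hc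
  refine ⟨⟨fun h => gp cons f T h.1,
    fun h x => gp_nonneg cons f T hf h.1 x,
    fun h x hx => gp_supp cons f T h.1 x hx,
    fun h => gp_hasSum cons f T hfsum.summable hf h.1 (exists_consistent1 G hG h.1 h.2.1),
    fun h' h'' hsuf _ x hx => gp_chain cons f T hmono hfsum.summable hf h'.1 h''.1
      (exists_consistent1 G hG h''.1 h''.2.1) hsuf x hx⟩,
    fun h x hR hx => gp_T cons f T h.1 x hR hx⟩

lemma suppD2 (G : MSGame A B) (hG : G.WellFormed) (f : ℕ → ℝ) (k : ℕ) (μ : CPS2 G)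
    (hk : k ≠ 0) (hμ : memDeltaD2 G f k μ) (h : G.Hist) (x : ℕ × Strat2 G)
    (hx : μ.p h x ≠ 0) : x.1 < k := by
  haveI := finite_strat2 G hG
  by_contra hge
  push_neg at hge
  have h0 : margD2 μ h x.1 = 0 := (hμ hk).1 h x.1 hge
  have hle : μ.p h (x.1, x.2) ≤ margD2 μ h x.1 :=
    Summable.le_tsum Summable.of_finite x.2 fun j _ => μ.nonneg h (x.1, j)
  exact hx (le_antisymm (by simpa [h0] using hle) (μ.nonneg h x))

lemma suppD1 (G : MSGame A B) (hG : G.WellFormed) (f : ℕ → ℝ) (k : ℕ) (μ : CPS1 G)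
    (hk : k ≠ 0) (hμ : memDeltaD1 G f k μ) (h : G.Hist) (x : ℕ × Strat1 G)
    (hx : μ.p h x ≠ 0) : x.1 < k := by
  haveI := finite_strat1 G hG
  by_contra hge
  push_neg at hge
  have h0 : margD1 μ h x.1 = 0 := (hμ hk).1 h x.1 hge
  have hle : μ.p h (x.1, x.2) ≤ margD1 μ h x.1 :=
    Summable.le_tsum Summable.of_finite x.2 fun j _ => μ.nonneg h (x.1, j)
  exact hx (le_antisymm (by simpa [h0] using hle) (μ.nonneg h x))

end DynP1Aux
end DynP1AuxSection

/-- dynamic version of Proposition 1: the dynamic Δ^κ-rationalization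
procedure stabilizes for the level-k type after k steps, for each player. -/
theorem sigmaD_stabilizes_at_level {A B : Type*} (G : MSGame A B) (hG : G.WellFormed)
    (v1 v2 : List (A × B) → ℝ)
    (f : ℕ → ℝ) (hf : ∀ n, 0 < f n) (hfsum : HasSum f 1) :
    ∀ k t : ℕ, k ≤ t →
      SigmaDSec1 G v1 v2 f t k = SigmaDSec1 G v1 v2 f k k ∧
      SigmaDSec2 G v1 v2 f t k = SigmaDSec2 G v1 v2 f k k := by
  classical
  haveI hfin1 : Finite (Strat1 G) := DynP1Aux.finite_strat1 G hG
  haveI hfin2 : Finite (Strat2 G) := DynP1Aux.finite_strat2 G hG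
  have mem1 : ∀ (n : ℕ) (x : ℕ × Strat1 G), x ∈ (SigmaD G v1 v2 f (n+1)).1 ↔
      (x ∈ (SigmaD G v1 v2 f n).1 ∧ ∃ μ : CPS2 G, memDeltaD2 G f x.1 μ ∧
        (∀ h : G.Hist,
          (∃ y : ℕ × Strat2 G, y ∈ (SigmaD G v1 v2 f n).2 ∧ consistent2 G y.2 h.1) →
          ∑' y : ℕ × Strat2 G, Set.indicator (SigmaD G v1 v2 f n).2 (μ.p h) y = 1) ∧
        seqRat1 G v1 x.1 μ x.2) := fun n x => Iff.rfl
  have mem2 : ∀ (n : ℕ) (x : ℕ × Strat2 G), x ∈ (SigmaD G v1 v2 f (n+1)).2 ↔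
      (x ∈ (SigmaD G v1 v2 f n).2 ∧ ∃ μ : CPS1 G, memDeltaD1 G f x.1 μ ∧
        (∀ h : G.Hist,
          (∃ y : ℕ × Strat1 G, y ∈ (SigmaD G v1 v2 f n).1 ∧ consistent1 G y.2 h.1) →
          ∑' y : ℕ × Strat1 G, Set.indicator (SigmaD G v1 v2 f n).1 (μ.p h) y = 1) ∧
        seqRat2 G v2 x.1 μ x.2) := fun n x => Iff.rfl
  have anti1 : ∀ n, (SigmaD G v1 v2 f (n+1)).1 ⊆ (SigmaD G v1 v2 f n).1 ∧
      (SigmaD G v1 v2 f (n+1)).2 ⊆ (SigmaD G v1 v2 f n).2 :=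
    fun n => ⟨fun x hx => ((mem1 n x).mp hx).1, fun x hx => ((mem2 n x).mp hx).1⟩
  have anti : ∀ m n : ℕ, m ≤ n → ((SigmaD G v1 v2 f n).1 ⊆ (SigmaD G v1 v2 f m).1 ∧
      (SigmaD G v1 v2 f n).2 ⊆ (SigmaD G v1 v2 f m).2) := by
    intro m n h
    induction h with
    | refl => exact ⟨subset_rfl, subset_rfl⟩
    | step h' IH => exact ⟨fun x hx => IH.1 ((anti1 _).1 hx), fun x hx => IH.2 ((anti1 _).2 hx)⟩
  have lvl0 : ∀ n, (∀ s : Strat1 G, ((0 : ℕ), s) ∈ (SigmaD G v1 v2 f n).1) ∧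
      (∀ s : Strat2 G, ((0 : ℕ), s) ∈ (SigmaD G v1 v2 f n).2) := by
    intro n
    induction n with
    | zero => exact ⟨fun s => Set.mem_univ _, fun s => Set.mem_univ _⟩
    | succ n IH =>
      constructor
      · intro s
        refine (mem1 n ((0 : ℕ), s)).mpr ⟨IH.1 s, ?_⟩
        obtain ⟨μ, hμ⟩ := DynP1Aux.exists_cps2 G hG f hf hfsum ((SigmaD G v1 v2 f n).2)
        refine ⟨μ, fun h0 => absurd rfl h0, ?_, ?_⟩
        · intro h hr
          have hip : Set.indicator (SigmaD G v1 v2 f n).2 (μ.p h) = μ.p h := by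
            funext x
            by_cases hx : x ∈ (SigmaD G v1 v2 f n).2
            · rw [Set.indicator_of_mem hx]
            · rw [Set.indicator_of_notMem hx]
              exact (hμ h x hr hx).symm
          rw [hip, (μ.hasSum_one h).tsum_eq]
        · intro h _ s' _
          have e0 : ∀ s1 : Strat1 G, expU1 G v1 0 μ h s1 = 0 := by
            intro s1
            simp [expU1, payU1]
          simp only [e0, le_refl]
      · intro s
        refine (mem2 n ((0 : ℕ), s)).mpr ⟨IH.2 s, ?_⟩
        obtain ⟨μ, hμ⟩ := DynP1Aux.exists_cps1 G hG f hf hfsum ((SigmaD G v1 v2 f n).1)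
        refine ⟨μ, fun h0 => absurd rfl h0, ?_, ?_⟩
        · intro h hr
          have hip : Set.indicator (SigmaD G v1 v2 f n).1 (μ.p h) = μ.p h := by
            funext x
            by_cases hx : x ∈ (SigmaD G v1 v2 f n).1
            · rw [Set.indicator_of_mem hx]
            · rw [Set.indicator_of_notMem hx]
              exact (hμ h x hr hx).symm
          rw [hip, (μ.hasSum_one h).tsum_eq]
        · intro h _ s' _
          have e0 : ∀ s2 : Strat2 G, expU2 G v2 0 μ h s2 = 0 := by
            intro s2
            simp [expU2, payU2]
          simp only [e0, le_refl]
  have key : ∀ k t : ℕ, k ≤ t →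
      (∀ s : Strat1 G, (k, s) ∈ (SigmaD G v1 v2 f k).1 → (k, s) ∈ (SigmaD G v1 v2 f t).1) ∧
      (∀ s : Strat2 G, (k, s) ∈ (SigmaD G v1 v2 f k).2 → (k, s) ∈ (SigmaD G v1 v2 f t).2) := by
    intro k
    induction k using Nat.strong_induction_on with
    | _ k IH =>
    intro t
    induction t with
    | zero =>
      intro ht
      obtain rfl := Nat.le_zero.mp ht
      exact ⟨fun s hs => hs, fun s hs => hs⟩
    | succ t IHt =>
      intro ht
      rcases Nat.eq_or_lt_of_le ht with heq | hlt
      · subst heq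
        exact ⟨fun s hs => hs, fun s hs => hs⟩
      · have hkt : k ≤ t := Nat.lt_succ_iff.mp hlt
        have IHt' := IHt hkt
        cases k with
        | zero => exact ⟨fun s _ => (lvl0 (t+1)).1 s, fun s _ => (lvl0 (t+1)).2 s⟩
        | succ m =>
          have hmt : m ≤ t := Nat.le_of_succ_le hkt
          constructor
          · intro s hs
            obtain ⟨hs0, μ, hδ, hcond, hrat⟩ := (mem1 m ((m+1 : ℕ), s)).mp hs
            refine (mem1 t ((m+1 : ℕ), s)).mpr ⟨IHt'.1 s hs, μ, hδ, ?_, hrat⟩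
            intro h hr
            obtain ⟨y, hyt, hyc⟩ := hr
            have hym : y ∈ (SigmaD G v1 v2 f m).2 := (anti m t hmt).2 hyt
            have hm1 := hcond h ⟨y, hym, hyc⟩
            rw [← hm1]
            apply tsum_congr
            intro x
            by_cases hx0 : μ.p h x = 0
            · simp [Set.indicator_apply, hx0]
            · have hxlt : x.1 < m + 1 :=
                DynP1Aux.suppD2 G hG f (m+1) μ (Nat.succ_ne_zero m) hδ h x hx0
              have hxle : x.1 ≤ m := Nat.lt_succ_iff.mp hxlt
              have hiff : x ∈ (SigmaD G v1 v2 f t).2 ↔ x ∈ (SigmaD G v1 v2 f m).2 := by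
                constructor
                · intro hxm
                  exact (IH x.1 hxlt m hxle).2 x.2 ((anti x.1 t (hxle.trans hmt)).2 hxm)
                · intro hxm
                  exact (IH x.1 hxlt t (hxle.trans hmt)).2 x.2 ((anti x.1 m hxle).2 hxm)
              by_cases hxm : x ∈ (SigmaD G v1 v2 f t).2
              · rw [Set.indicator_of_mem hxm, Set.indicator_of_mem (hiff.mp hxm)]
              · rw [Set.indicator_of_notMem hxm,
                  Set.indicator_of_notMem (fun hc => hxm (hiff.mpr hc))]
          · intro s hs
            obtain ⟨hs0, μ, hδ, hcond, hrat⟩ := (mem2 m ((m+1 : ℕ), s)).mp hs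
            refine (mem2 t ((m+1 : ℕ), s)).mpr ⟨IHt'.2 s hs, μ, hδ, ?_, hrat⟩
            intro h hr
            obtain ⟨y, hyt, hyc⟩ := hr
            have hym : y ∈ (SigmaD G v1 v2 f m).1 := (anti m t hmt).1 hyt
            have hm1 := hcond h ⟨y, hym, hyc⟩
            rw [← hm1]
            apply tsum_congr
            intro x
            by_cases hx0 : μ.p h x = 0
            · simp [Set.indicator_apply, hx0]
            · have hxlt : x.1 < m + 1 :=
                DynP1Aux.suppD1 G hG f (m+1) μ (Nat.succ_ne_zero m) hδ h x hx0
              have hxle : x.1 ≤ m := Nat.lt_succ_iff.mp hxlt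
              have hiff : x ∈ (SigmaD G v1 v2 f t).1 ↔ x ∈ (SigmaD G v1 v2 f m).1 := by
                constructor
                · intro hxm
                  exact (IH x.1 hxlt m hxle).1 x.2 ((anti x.1 t (hxle.trans hmt)).1 hxm)
                · intro hxm
                  exact (IH x.1 hxlt t (hxle.trans hmt)).1 x.2 ((anti x.1 m hxle).1 hxm)
              by_cases hxm : x ∈ (SigmaD G v1 v2 f t).1
              · rw [Set.indicator_of_mem hxm, Set.indicator_of_mem (hiff.mp hxm)]
              · rw [Set.indicator_of_notMem hxm,
                  Set.indicator_of_notMem (fun hc => hxm (hiff.mpr hc))]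
  intro k t hkt
  constructor
  · apply Set.Subset.antisymm
    · intro s hs
      exact (anti k t hkt).1 hs
    · intro s hs
      exact (key k t hkt).1 s hs
  · apply Set.Subset.antisymm
    · intro s hs
      exact (anti k t hkt).2 hs
    · intro s hs
      exact (key k t hkt).2 s hs
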